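/- Let p be a prime and let a = (a_1,…,a_n), b = (b_1,…,b_n) ∈ ℤ_(p)^n satisfy the Hypothesis, and suppose in addition that b_k ≡ 1 (mod p) and b_l ≡ 1 (mod p) for two indices k, l, that is, b_k − 1 ∈ pℤ_p and b_l − 1 ∈ pℤ_p. Put ε_k = b_k − 1 and ε_l = b_l − 1. Then γ_l ≠ 0 and γ_k / γ_l = ∏_{i=1}^n [ Γ_p(b_i − ε_k) / Γ_p(a_i − ε_k) ] · [ Γ_p(a_i − ε_l) / Γ_p(b_i − ε_l) ]. -/

import Mathlib

open Finset Filter Topology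

noncomputable section

section helpers
variable (p : ℕ) [hp : Fact p.Prime]

lemma norm3 (u v w : ℚ_[p]) : ‖u + v + w‖ ≤ max (max ‖u‖ ‖v‖) ‖w‖ :=
  le_trans (Padic.nonarchimedean _ _) (max_le_max (Padic.nonarchimedean _ _) le_rfl)

lemma norm_cast_div_p_le_one {q : ℚ} (h : ‖(((q / p : ℚ)) : ℚ_[p])‖ ≤ 1) :
    ‖((q : ℚ_[p]))‖ ≤ (p : ℝ)⁻¹ := by
  have hp0 : (0:ℝ) < p := by exact_mod_cast hp.1.pos
  have hcast : ((q / (p:ℕ) : ℚ) : ℚ_[p]) = (q : ℚ_[p]) / ((p:ℕ) : ℚ_[p]) := by push_cast; ring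
  rw [hcast, norm_div, Padic.norm_p, div_le_one (by positivity)] at h
  exact h

lemma T_succ_eq (T : ℕ) (hT : T < p) (h : ‖((T : ℚ_[p]) + 1)‖ < 1) : T + 1 = p := by
  have hc : ((T:ℚ_[p]) + 1) = (((T + 1 : ℕ) : ℤ) : ℚ_[p]) := by push_cast; ring
  rw [hc, Padic.norm_intCast_lt_one_iff] at h
  have hdvd : p ∣ T + 1 := by exact_mod_cast h
  exact Nat.le_antisymm (Nat.succ_le_of_lt hT) (Nat.le_of_dvd (Nat.succ_pos T) hdvd)

lemma norm_lt_one_iff_le_inv (x : ℚ_[p]) : ‖x‖ < 1 ↔ ‖x‖ ≤ (p : ℝ)⁻¹ := by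
  have h := (Padic.norm_le_pow_iff_norm_lt_pow_add_one x (-1)).symm
  simpa [zpow_neg_one] using h

lemma norm_sub_lt_one_iff (β α : ℚ) (T : ℕ)
    (hβn : ‖((β - 1 : ℚ) : ℚ_[p])‖ ≤ (p:ℝ)⁻¹)
    (hT : T < p)
    (hTn : ‖((α + T : ℚ) : ℚ_[p])‖ ≤ (p:ℝ)⁻¹) :
    ‖((α - β : ℚ) : ℚ_[p])‖ < 1 ↔ T + 1 = p := by
  have hpinv1 : (p:ℝ)⁻¹ < 1 := inv_lt_one_of_one_lt₀ (by exact_mod_cast hp.1.one_lt)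
  rw [norm_lt_one_iff_le_inv]
  constructor
  · intro h
    apply T_succ_eq p T hT
    have hid : ((T:ℚ_[p]) + 1) = ((α + T : ℚ) : ℚ_[p]) + (-(((α - β : ℚ) : ℚ_[p]))) +
        (-(((β - 1 : ℚ) : ℚ_[p]))) := by push_cast; ring
    rw [hid]
    refine lt_of_le_of_lt (norm3 p _ _ _) ?_
    rw [norm_neg, norm_neg]
    exact lt_of_le_of_lt (max_le (max_le hTn h) hβn) hpinv1
  · intro h
    have hTnorm : ‖((T:ℚ_[p]) + 1)‖ = (p:ℝ)⁻¹ := by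
      have hc : ((T:ℚ_[p]) + 1) = ((p:ℕ) : ℚ_[p]) := by
        have h2 : ((T + 1 : ℕ) : ℚ_[p]) = ((p:ℕ) : ℚ_[p]) := by rw [h]
        push_cast at h2
        exact h2
      rw [hc]
      exact Padic.norm_p
    have hid : (((α - β : ℚ)) : ℚ_[p]) = ((α + T : ℚ) : ℚ_[p]) + (-((T:ℚ_[p]) + 1)) +
        (-(((β - 1 : ℚ) : ℚ_[p]))) := by push_cast; ring
    rw [hid]
    refine le_trans (norm3 p _ _ _) ?_
    rw [norm_neg, norm_neg]
    exact max_le (max_le hTn (le_of_eq hTnorm)) hβn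

lemma dwork_lt_iff (β β1 α α1 : ℚ) (T : ℕ)
    (hβ0 : 0 < β)
    (hβn : ‖((β - 1 : ℚ) : ℚ_[p])‖ ≤ (p:ℝ)⁻¹)
    (hβ1 : β1 = (β + ((p:ℚ) - 1)) / p)
    (hα0 : 0 < α) (hαlt : α < 1)
    (hT : T < p) (hTn : ‖(((α + T) / p : ℚ) : ℚ_[p])‖ ≤ 1) (hα1 : α1 = (α + T) / p)
    (hne : α ≠ β) :
    α1 < β1 ↔ ¬(β < α ∧ ‖((α - β : ℚ) : ℚ_[p])‖ < 1) := by
  have hpQ : (0:ℚ) < p := by exact_mod_cast hp.1.pos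
  have hTn' : ‖((α + T : ℚ) : ℚ_[p])‖ ≤ (p:ℝ)⁻¹ := norm_cast_div_p_le_one p hTn
  have hF1 := norm_sub_lt_one_iff p β α T hβn hT hTn'
  by_cases hT1 : T + 1 = p
  · have hTq : (T:ℚ) = (p:ℚ) - 1 := by
      have hq : ((T:ℚ)) + 1 = p := by exact_mod_cast congrArg (Nat.cast : ℕ → ℚ) hT1
      linarith
    have harith : α1 < β1 ↔ α < β := by
      rw [hα1, hβ1, div_lt_div_iff₀ hpQ hpQ]
      constructor <;> intro h <;> nlinarith
    rw [harith]
    have hnormlt : ‖((α - β : ℚ) : ℚ_[p])‖ < 1 := hF1.mpr hT1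
    simp only [hnormlt, and_true]
    exact ⟨fun h => not_lt.mpr h.le, fun h => lt_of_le_of_ne (not_lt.mp h) hne⟩
  · have hTle : (T:ℚ) + 2 ≤ p := by
      have h2 : T + 2 ≤ p := by omega
      exact_mod_cast h2
    have hlt : α1 < β1 := by
      rw [hα1, hβ1, div_lt_div_iff₀ hpQ hpQ]
      nlinarith
    exact iff_of_true hlt (fun hand => (fun h => hT1 (hF1.mp h)) hand.2)

end helpers


lemma gamma_step (p : ℕ) [hp : Fact p.Prime] (Γ : ℚ_[p] → ℚ_[p])
    (hΓc : ContinuousOn Γ {x : ℚ_[p] | ‖x‖ ≤ 1})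
    (hΓ : ∀ m : ℕ, 0 < m →
      Γ (m : ℚ_[p]) = (-1 : ℚ_[p]) ^ m * ∏ k ∈ Finset.Ico 1 m, if p ∣ k then 1 else (k : ℚ_[p]))
    (x : ℚ_[p]) (hx : ‖x‖ ≤ 1) :
    Γ (x + 1) = -(if ‖x‖ < 1 then 1 else x) * Γ x := by
  have hp1 : (1:ℝ) < p := by exact_mod_cast hp.1.one_lt
  set z : ℤ_[p] := ⟨x, hx⟩ with hz
  set m : ℕ → ℕ := fun j => z.appr j + p ^ j with hm
  have hmpos : ∀ j, 0 < m j :=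
    fun j => Nat.lt_of_lt_of_le (pow_pos hp.1.pos j) (Nat.le_add_left _ _)
  have hdist : ∀ j, ‖(m j : ℚ_[p]) - x‖ ≤ (p : ℝ) ^ (-(j:ℤ)) := by
    intro j
    have h1 : ‖(z.appr j : ℤ_[p]) - z‖ ≤ (p:ℝ) ^ (-(j:ℤ)) := by
      rw [← norm_neg, neg_sub, PadicInt.norm_le_pow_iff_mem_span_pow]
      exact PadicInt.appr_spec j z
    have h2 : ‖((p:ℤ_[p])) ^ j‖ ≤ (p:ℝ) ^ (-(j:ℤ)) := le_of_eq (PadicInt.norm_p_pow j)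
    have h3 : ((m j : ℤ_[p])) - z = ((z.appr j : ℤ_[p]) - z) + (p:ℤ_[p]) ^ j := by
      simp only [hm]; push_cast; ring
    have h4 : ‖(m j : ℤ_[p]) - z‖ ≤ (p:ℝ) ^ (-(j:ℤ)) := by
      rw [h3]; exact le_trans (PadicInt.nonarchimedean _ _) (max_le h1 h2)
    rw [PadicInt.norm_def] at h4
    have h5 : (((m j : ℤ_[p]) - z : ℤ_[p]) : ℚ_[p]) = (m j : ℚ_[p]) - x := by
      push_cast [hz]; rfl
    rwa [h5] at h4
  have hpow0 : Tendsto (fun j : ℕ => (p:ℝ) ^ (-(j:ℤ))) atTop (𝓝 0) := by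
    have := tendsto_pow_atTop_nhds_zero_of_lt_one
      (le_of_lt (inv_pos.mpr (lt_trans one_pos hp1))) (inv_lt_one_of_one_lt₀ hp1)
    simpa [zpow_neg, zpow_natCast, inv_pow] using this
  have htends : Tendsto (fun j => ((m j : ℚ_[p]))) atTop (𝓝 x) := by
    rw [tendsto_iff_norm_sub_tendsto_zero]
    exact squeeze_zero (fun j => norm_nonneg _) hdist hpow0
  have hmem : ∀ j, (m j : ℚ_[p]) ∈ {y : ℚ_[p] | ‖y‖ ≤ 1} := by
    intro j
    have := Padic.norm_int_le_one (p := p) ((m j : ℤ))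
    simpa using this
  have hL1 : Tendsto (fun j => Γ (m j)) atTop (𝓝 (Γ x)) := by
    refine ((hΓc x hx).tendsto).comp ?_
    rw [tendsto_nhdsWithin_iff]
    exact ⟨htends, Filter.Eventually.of_forall hmem⟩
  have hx1 : ‖x + 1‖ ≤ 1 := le_trans (Padic.nonarchimedean _ _) (by simp [hx])
  have hL2 : Tendsto (fun j => Γ ((m j : ℚ_[p]) + 1)) atTop (𝓝 (Γ (x + 1))) := by
    refine ((hΓc (x+1) hx1).tendsto).comp ?_
    rw [tendsto_nhdsWithin_iff]
    refine ⟨htends.add tendsto_const_nhds, Filter.Eventually.of_forall fun j => ?_⟩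
    exact le_trans (Padic.nonarchimedean _ _) (by simpa using hmem j)
  have hstep : ∀ j, Γ ((m j : ℚ_[p]) + 1) =
      -(if p ∣ m j then 1 else (m j : ℚ_[p])) * Γ (m j) := by
    intro j
    have h1 := hΓ (m j) (hmpos j)
    have h2 := hΓ (m j + 1) (Nat.succ_pos _)
    rw [Finset.prod_Ico_succ_top (hmpos j)] at h2
    rw [pow_succ] at h2
    push_cast at h2
    rw [h2, h1]
    ring
  by_cases hlt : ‖x‖ < 1
  · rw [if_pos hlt]
    have heq : ∀ j, 1 ≤ j → Γ ((m j : ℚ_[p]) + 1) = -1 * Γ (m j) := by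
      intro j hj
      have hdvd : p ∣ m j := by
        have h5 : ‖(m j : ℚ_[p])‖ < 1 := by
          have h6 : (m j : ℚ_[p]) = x + ((m j : ℚ_[p]) - x) := by ring
          rw [h6]
          refine lt_of_le_of_lt (Padic.nonarchimedean _ _) (max_lt hlt ?_)
          refine lt_of_le_of_lt (hdist j) ?_
          rw [zpow_neg, zpow_natCast]
          exact inv_lt_one_of_one_lt₀ (one_lt_pow₀ hp1 (by omega))
        have h7 : ‖(((m j : ℤ)) : ℚ_[p])‖ < 1 := by exact_mod_cast h5
        exact_mod_cast Padic.norm_intCast_lt_one_iff.1 h7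
      rw [hstep j, if_pos hdvd]
    have hlim : Tendsto (fun j => -1 * Γ (m j)) atTop (𝓝 (-1 * Γ x)) :=
      tendsto_const_nhds.mul hL1
    have hcg : (fun j => -1 * Γ (m j)) =ᶠ[atTop] (fun j => Γ ((m j : ℚ_[p]) + 1)) := by
      filter_upwards [eventually_ge_atTop 1] with j hj
      exact (heq j hj).symm
    have := tendsto_nhds_unique hL2 (hlim.congr' hcg)
    simpa using this
  · rw [if_neg hlt]
    have hxeq : ‖x‖ = 1 := le_antisymm hx (not_lt.mp hlt)
    have heq : ∀ j, 1 ≤ j → Γ ((m j : ℚ_[p]) + 1) = -(m j : ℚ_[p]) * Γ (m j) := by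
      intro j hj
      have hndvd : ¬ p ∣ m j := by
        intro hdvd
        have h5 : ‖(m j : ℚ_[p])‖ < 1 := by
          have : ((p:ℤ)) ∣ ((m j : ℤ)) := by exact_mod_cast hdvd
          have := (Padic.norm_intCast_lt_one_iff (p := p) (k := (m j : ℤ))).2 this
          exact_mod_cast this
        have h6 : ‖x‖ < 1 := by
          have h7 : x = (m j : ℚ_[p]) + (x - (m j : ℚ_[p])) := by ring
          rw [h7]
          refine lt_of_le_of_lt (Padic.nonarchimedean _ _) (max_lt h5 ?_)
          rw [← norm_neg, neg_sub]
          refine lt_of_le_of_lt (hdist j) ?_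
          rw [zpow_neg, zpow_natCast]
          exact inv_lt_one_of_one_lt₀ (one_lt_pow₀ hp1 (by omega))
        exact hlt h6
      rw [hstep j, if_neg hndvd]
    have hlim : Tendsto (fun j => -(m j : ℚ_[p]) * Γ (m j)) atTop (𝓝 (-x * Γ x)) :=
      (htends.neg).mul hL1
    have hcg : (fun j => -(m j : ℚ_[p]) * Γ (m j)) =ᶠ[atTop]
        (fun j => Γ ((m j : ℚ_[p]) + 1)) := by
      filter_upwards [eventually_ge_atTop 1] with j hj
      exact (heq j hj).symm
    exact tendsto_nhds_unique hL2 (hlim.congr' hcg)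


/-- `α'` is the Dwork prime `α^{(1)}` of `α`: `α' = (α + T)/p` where `0 ≤ T < p`
and `α + T ≡ 0 (mod p)` (i.e. `(α + T)/p` has p-adic norm at most `1`). -/
def IsDworkPrime (p : ℕ) [Fact p.Prime] (α α' : ℚ) : Prop :=
  ∃ T : ℕ, T < p ∧ ‖(((α + T) / p : ℚ) : ℚ_[p])‖ ≤ 1 ∧ α' = (α + T) / p

-- auxiliary lemmas are inserted below
/-- `(x)₊ = x` if `x > 0` and `1` otherwise. -/
def rplus (x : ℚ) : ℚ := if 0 < x then x else 1

lemma rplus_pos (x : ℚ) : 0 < rplus x := by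
  unfold rplus; split <;> [assumption; norm_num]

lemma gamma_param (p : ℕ) [hp : Fact p.Prime] (Γ : ℚ_[p] → ℚ_[p])
    (hΓc : ContinuousOn Γ {x : ℚ_[p] | ‖x‖ ≤ 1})
    (hΓ : ∀ m : ℕ, 0 < m →
      Γ (m : ℚ_[p]) = (-1 : ℚ_[p]) ^ m * ∏ k ∈ Finset.Ico 1 m, if p ∣ k then 1 else (k : ℚ_[p]))
    (β β1 : ℚ) (hβ0 : 0 < β) (hβlt : β < 1)
    (hβn : ‖((β - 1 : ℚ) : ℚ_[p])‖ ≤ (p:ℝ)⁻¹)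
    (hβ1 : β1 = (β + ((p:ℚ) - 1)) / p)
    (α α1 : ℚ) (hα0 : 0 < α) (hαlt : α < 1)
    (hαn : ‖((α : ℚ) : ℚ_[p])‖ ≤ 1)
    (hd : IsDworkPrime p α α1) :
    Γ ((α - (β - 1) : ℚ) : ℚ_[p]) =
      ((if α < β then (1:ℚ_[p]) else -1) *
        (if β < α ∧ ‖((α - β : ℚ) : ℚ_[p])‖ < 1 then (p:ℚ_[p])⁻¹ else 1) *
        (((rplus (α - β) : ℚ) : ℚ_[p]) / ((rplus (α1 - β1) : ℚ) : ℚ_[p]))) *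
      Γ ((Int.fract (α - β) : ℚ) : ℚ_[p]) := by
  obtain ⟨T, hTp, hTn, hα1eq⟩ := hd
  have hpQ : (0:ℚ) < p := by exact_mod_cast hp.1.pos
  have hpne : ((p:ℚ_[p])) ≠ 0 := by exact_mod_cast hp.1.ne_zero
  have hTn' : ‖((α + T : ℚ) : ℚ_[p])‖ ≤ (p:ℝ)⁻¹ := norm_cast_div_p_le_one p hTn
  have hF1 := norm_sub_lt_one_iff p β α T hβn hTp hTn'
  rcases lt_trichotomy α β with hc | hc | hc
  · -- α < β
    have hfl : ⌊(α - β : ℚ)⌋ = -1 := by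
      rw [Int.floor_eq_iff]
      constructor <;> push_cast <;> linarith
    have hfr : Int.fract (α - β) = α - β + 1 := by
      rw [← Int.self_sub_floor, hfl]; push_cast; ring
    have hrp1 : rplus (α - β) = 1 := by
      unfold rplus; rw [if_neg (not_lt.mpr (by linarith))]
    have hα1le : α1 ≤ β1 := by
      rw [hα1eq, hβ1, div_le_div_iff₀ hpQ hpQ]
      by_cases hT1 : T + 1 = p
      · have hTq : (T:ℚ) = (p:ℚ) - 1 := by
          have hq : ((T:ℚ)) + 1 = p := by exact_mod_cast hT1
          linarith
        nlinarith
      · have hTle : (T:ℚ) + 2 ≤ p := by exact_mod_cast (show T + 2 ≤ p by omega)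
        nlinarith
    have hrp2 : rplus (α1 - β1) = 1 := by
      unfold rplus; rw [if_neg (not_lt.mpr (by linarith))]
    rw [if_pos hc, if_neg (fun h => absurd h.1 (not_lt.mpr hc.le)), hrp1, hrp2, hfr]
    have harg : (α - (β - 1) : ℚ) = α - β + 1 := by ring
    rw [harg]
    norm_num
  · -- α = β
    subst hc
    have hT1 : T + 1 = p := hF1.mp (by simp)
    have hTq : (T:ℚ) = (p:ℚ) - 1 := by
      have hq : ((T:ℚ)) + 1 = p := by exact_mod_cast hT1
      linarith
    have hα1β1 : α1 = β1 := by rw [hα1eq, hβ1, hTq]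
    have hrp : rplus (0:ℚ) = 1 := by unfold rplus; norm_num
    rw [if_neg (lt_irrefl α), if_neg (fun h => lt_irrefl α h.1), hα1β1, sub_self, sub_self, hrp]
    have harg : (α - (α - 1) : ℚ) = 1 := by ring
    rw [harg]
    have hstep := gamma_step p Γ hΓc hΓ 0 (by simp)
    simp only [norm_zero, zero_lt_one, if_pos, zero_add] at hstep
    simpa using hstep
  · -- β < α
    have hfr : Int.fract (α - β) = α - β := Int.fract_eq_self.mpr ⟨by linarith, by linarith⟩
    have hrp1 : rplus (α - β) = α - β := by
      unfold rplus; rw [if_pos (by linarith)]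
    have hx : ‖((α - β : ℚ) : ℚ_[p])‖ ≤ 1 := by
      have hβnorm : ‖((β : ℚ) : ℚ_[p])‖ ≤ 1 := by
        have hid : ((β:ℚ) : ℚ_[p]) = ((β - 1 : ℚ) : ℚ_[p]) + 1 := by push_cast; ring
        rw [hid]
        refine le_trans (Padic.nonarchimedean _ _) (max_le (le_trans hβn ?_) (by simp))
        exact inv_le_one_of_one_le₀ (by exact_mod_cast hp.1.one_le)
      have hid : ((α - β : ℚ) : ℚ_[p]) = ((α:ℚ) : ℚ_[p]) + (-((β:ℚ):ℚ_[p])) := by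
        push_cast; ring
      rw [hid]
      exact le_trans (Padic.nonarchimedean _ _) (max_le hαn (by rwa [norm_neg]))
    have hstep := gamma_step p Γ hΓc hΓ (((α - β : ℚ) : ℚ_[p])) hx
    have harg : ((α - (β - 1) : ℚ) : ℚ_[p]) = ((α - β : ℚ) : ℚ_[p]) + 1 := by push_cast; ring
    rw [harg, hstep, if_neg (not_lt.mpr hc.le), hfr, hrp1]
    have hsubne : ((α - β : ℚ) : ℚ_[p]) ≠ 0 := by
      rw [Ne, Rat.cast_eq_zero]
      exact sub_ne_zero.mpr (ne_of_gt hc)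
    by_cases hT1 : T + 1 = p
    · have hnorm : ‖((α - β : ℚ) : ℚ_[p])‖ < 1 := hF1.mpr hT1
      rw [if_pos hnorm, if_pos ⟨hc, hnorm⟩]
      have hTq : (T:ℚ) = (p:ℚ) - 1 := by
        have hq : ((T:ℚ)) + 1 = p := by exact_mod_cast hT1
        linarith
      have hd1 : α1 - β1 = (α - β)/p := by rw [hα1eq, hβ1, hTq]; ring
      have hrp2 : rplus (α1 - β1) = (α - β)/p := by
        unfold rplus; rw [hd1, if_pos (div_pos (by linarith) hpQ)]
      rw [hrp2]
      have hcast : (((α - β)/p : ℚ) : ℚ_[p]) = ((α - β : ℚ):ℚ_[p]) / (p:ℚ_[p]) := by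
        push_cast; ring
      rw [hcast]
      have hq : ((α - β : ℚ):ℚ_[p]) / (((α - β : ℚ):ℚ_[p]) / (p:ℚ_[p])) = (p:ℚ_[p]) := by
        rw [div_div_eq_mul_div, mul_comm, mul_div_assoc, div_self hsubne, mul_one]
      rw [hq]
      field_simp
    · have hnorm : ¬ ‖((α - β : ℚ) : ℚ_[p])‖ < 1 := fun h => hT1 (hF1.mp h)
      rw [if_neg hnorm, if_neg (fun h => hnorm h.2)]
      have hα1lt : α1 < β1 := by
        rw [hα1eq, hβ1, div_lt_div_iff₀ hpQ hpQ]
        have hTle : (T:ℚ) + 2 ≤ p := by exact_mod_cast (show T + 2 ≤ p by omega)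
        nlinarith
      have hrp2 : rplus (α1 - β1) = 1 := by
        unfold rplus; rw [if_neg (not_lt.mpr (by linarith))]
      rw [hrp2]
      push_cast
      ring

/-- `K(x) = ∏ᵢ (aᵢ - x)₊ / (bᵢ - x)₊`. -/
def Kfun {n : ℕ} (a b : Fin n → ℚ) (x : ℚ) : ℚ :=
  ∏ i, rplus (a i - x) / rplus (b i - x)

/-- `Z(x) = #{i : aᵢ < x} - #{j : bⱼ < x}`. -/
def Zfun {n : ℕ} (a b : Fin n → ℚ) (x : ℚ) : ℤ :=
  ((univ.filter fun i => a i < x).card : ℤ) - ((univ.filter fun j => b j < x).card : ℤ)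

/-- The constant `γ_k` of Kedlaya's residue formula. -/
def gammaConst (p : ℕ) [Fact p.Prime] {n : ℕ} (Γ : ℚ_[p] → ℚ_[p])
    (a b a1 b1 : Fin n → ℚ) (k : Fin n) : ℚ_[p] :=
  (-1 : ℚ_[p]) ^ Zfun a b (b k) * (p : ℚ_[p]) ^ (-Zfun a1 b1 (b1 k)) *
      ((Kfun a1 b1 (b1 k) : ℚ) : ℚ_[p]) / ((Kfun a b (b k) : ℚ) : ℚ_[p]) *
    ∏ i, Γ ((Int.fract (b i - b k) : ℚ) : ℚ_[p]) / Γ ((Int.fract (a i - b k) : ℚ) : ℚ_[p])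

lemma neg_zpow_helper (p : ℕ) [Fact p.Prime] (m r : ℕ) :
    ((-1:ℚ_[p])) ^ ((m:ℤ) - r) = ((-1:ℚ_[p])) ^ (m + r) := by
  have h1 : ((-1:ℚ_[p])) ^ ((m:ℤ) - r) = ((-1:ℚ_[p])) ^ (m:ℤ) / ((-1:ℚ_[p])) ^ (r:ℤ) :=
    zpow_sub₀ (by norm_num) _ _
  have hsq : ((-1:ℚ_[p]) ^ r) * ((-1:ℚ_[p]) ^ r) = 1 := by
    rw [← pow_add]; exact Even.neg_one_pow ⟨r, rfl⟩
  rw [h1, zpow_natCast, zpow_natCast, pow_add, div_eq_mul_inv,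
    inv_eq_of_mul_eq_one_right hsq]

lemma neg_one_pow_eq_of_even_add (p : ℕ) [Fact p.Prime] (A B : ℕ) (h : Even (A + B)) :
    ((-1:ℚ_[p])) ^ A = (-1) ^ B := by
  have h1 : ((-1:ℚ_[p])) ^ A * (-1) ^ B = 1 := by rw [← pow_add]; exact h.neg_one_pow
  have h2 : ((-1:ℚ_[p])) ^ B * (-1) ^ B = 1 := by
    rw [← pow_add]; exact Even.neg_one_pow ⟨B, rfl⟩
  calc ((-1:ℚ_[p])) ^ A = ((-1:ℚ_[p])) ^ A * (((-1:ℚ_[p])) ^ B * (-1) ^ B) := by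
        rw [h2, mul_one]
    _ = (((-1:ℚ_[p])) ^ A * (-1) ^ B) * (-1) ^ B := by ring
    _ = (-1) ^ B := by rw [h1, one_mul]

lemma gammaConst_eq (p : ℕ) [hp : Fact p.Prime] {n : ℕ}
    (Γ : ℚ_[p] → ℚ_[p]) (hΓc : ContinuousOn Γ {x : ℚ_[p] | ‖x‖ ≤ 1})
    (hΓ : ∀ m : ℕ, 0 < m →
      Γ (m : ℚ_[p]) = (-1 : ℚ_[p]) ^ m * ∏ k ∈ Finset.Ico 1 m, if p ∣ k then 1 else (k : ℚ_[p]))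
    (a b a1 b1 : Fin n → ℚ)
    (haZ : ∀ i, ‖((a i : ℚ) : ℚ_[p])‖ ≤ 1) (hbZ : ∀ j, ‖((b j : ℚ) : ℚ_[p])‖ ≤ 1)
    (ha : ∀ i, 0 < a i ∧ a i < 1) (hb : ∀ j, 0 < b j ∧ b j < 1)
    (hab : ∀ i j, ∀ t : ℤ, a i - b j ≠ (t : ℚ))
    (hbdist : Function.Injective b)
    (ha1 : ∀ i, IsDworkPrime p (a i) (a1 i)) (hb1 : ∀ j, IsDworkPrime p (b j) (b1 j))
    (k : Fin n)
    (hk : ‖((b k - 1 : ℚ) : ℚ_[p])‖ ≤ (p : ℝ)⁻¹) :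
    gammaConst p Γ a b a1 b1 k = (p:ℚ_[p])⁻¹ *
      ∏ i, Γ ((b i - (b k - 1) : ℚ) : ℚ_[p]) / Γ ((a i - (b k - 1) : ℚ) : ℚ_[p]) := by
  classical
  have hpQ : (0:ℚ) < p := by exact_mod_cast hp.1.pos
  have hpne : ((p:ℚ_[p])) ≠ 0 := by exact_mod_cast hp.1.ne_zero
  have hpinv1 : (p:ℝ)⁻¹ < 1 := inv_lt_one_of_one_lt₀ (by exact_mod_cast hp.1.one_lt)
  obtain ⟨Tk, hTkp, hTkn, hTkeq⟩ := hb1 k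
  have hTk1 : Tk + 1 = p := by
    apply T_succ_eq p Tk hTkp
    have hid : ((Tk:ℚ_[p]) + 1) = ((b k + Tk : ℚ) : ℚ_[p]) + (-(((b k - 1 : ℚ)) : ℚ_[p])) := by
      push_cast; ring
    rw [hid]
    refine lt_of_le_of_lt (Padic.nonarchimedean _ _) (lt_of_le_of_lt (max_le
      (norm_cast_div_p_le_one p hTkn) (by rwa [norm_neg])) hpinv1)
  have hβ1 : b1 k = (b k + ((p:ℚ) - 1))/p := by
    have hq : ((Tk:ℚ)) + 1 = p := by exact_mod_cast hTk1
    have hq2 : (Tk:ℚ) = (p:ℚ) - 1 := by linarith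
    rw [hTkeq, hq2]
  have hgb : ∀ i, Γ ((b i - (b k - 1) : ℚ) : ℚ_[p]) =
      ((if b i < b k then (1:ℚ_[p]) else -1) *
        (if b k < b i ∧ ‖((b i - b k : ℚ) : ℚ_[p])‖ < 1 then (p:ℚ_[p])⁻¹ else 1) *
        (((rplus (b i - b k) : ℚ) : ℚ_[p]) / ((rplus (b1 i - b1 k) : ℚ) : ℚ_[p]))) *
      Γ ((Int.fract (b i - b k) : ℚ) : ℚ_[p]) :=
    fun i => gamma_param p Γ hΓc hΓ (b k) (b1 k) (hb k).1 (hb k).2 hk hβ1 (b i) (b1 i)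
      (hb i).1 (hb i).2 (hbZ i) (hb1 i)
  have hga : ∀ i, Γ ((a i - (b k - 1) : ℚ) : ℚ_[p]) =
      ((if a i < b k then (1:ℚ_[p]) else -1) *
        (if b k < a i ∧ ‖((a i - b k : ℚ) : ℚ_[p])‖ < 1 then (p:ℚ_[p])⁻¹ else 1) *
        (((rplus (a i - b k) : ℚ) : ℚ_[p]) / ((rplus (a1 i - b1 k) : ℚ) : ℚ_[p]))) *
      Γ ((Int.fract (a i - b k) : ℚ) : ℚ_[p]) :=
    fun i => gamma_param p Γ hΓc hΓ (b k) (b1 k) (hb k).1 (hb k).2 hk hβ1 (a i) (a1 i)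
      (ha i).1 (ha i).2 (haZ i) (ha1 i)
  have hRHS : ∏ i, Γ ((b i - (b k - 1) : ℚ) : ℚ_[p]) / Γ ((a i - (b k - 1) : ℚ) : ℚ_[p]) =
      (∏ i, (((if b i < b k then (1:ℚ_[p]) else -1) *
        (if b k < b i ∧ ‖((b i - b k : ℚ) : ℚ_[p])‖ < 1 then (p:ℚ_[p])⁻¹ else 1) *
        (((rplus (b i - b k) : ℚ) : ℚ_[p]) / ((rplus (b1 i - b1 k) : ℚ) : ℚ_[p]))) /
        ((if a i < b k then (1:ℚ_[p]) else -1) *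
        (if b k < a i ∧ ‖((a i - b k : ℚ) : ℚ_[p])‖ < 1 then (p:ℚ_[p])⁻¹ else 1) *
        (((rplus (a i - b k) : ℚ) : ℚ_[p]) / ((rplus (a1 i - b1 k) : ℚ) : ℚ_[p]))))) *
      ∏ i, Γ ((Int.fract (b i - b k) : ℚ) : ℚ_[p]) / Γ ((Int.fract (a i - b k) : ℚ) : ℚ_[p]) := by
    rw [← Finset.prod_mul_distrib]
    refine Finset.prod_congr rfl fun i _ => ?_
    rw [hgb i, hga i, mul_div_mul_comm]
  -- sign identity
  have hsign : ∏ i, ((if b i < b k then (1:ℚ_[p]) else -1) /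
      (if a i < b k then (1:ℚ_[p]) else -1)) = (-1:ℚ_[p]) ^ (Zfun a b (b k)) := by
    have h1 : ∀ i : Fin n, ((if b i < b k then (1:ℚ_[p]) else -1) /
        (if a i < b k then (1:ℚ_[p]) else -1)) =
        (if b i < b k then (1:ℚ_[p]) else -1) * (if a i < b k then (1:ℚ_[p]) else -1) := by
      intro i; by_cases h1 : b i < b k <;> by_cases h2 : a i < b k <;> simp [h1, h2]
    rw [Finset.prod_congr rfl (fun i _ => h1 i), Finset.prod_mul_distrib]
    have hpb : ∏ i, (if b i < b k then (1:ℚ_[p]) else -1) =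
        (-1:ℚ_[p]) ^ (univ.filter fun i => ¬ b i < b k).card := by
      rw [Finset.prod_ite, Finset.prod_const_one, Finset.prod_const, one_mul]
    have hpa : ∏ i, (if a i < b k then (1:ℚ_[p]) else -1) =
        (-1:ℚ_[p]) ^ (univ.filter fun i => ¬ a i < b k).card := by
      rw [Finset.prod_ite, Finset.prod_const_one, Finset.prod_const, one_mul]
    rw [hpb, hpa, ← pow_add, Zfun, neg_zpow_helper]
    apply neg_one_pow_eq_of_even_add
    have e1 := Finset.card_filter_add_card_filter_not
      (s := (univ : Finset (Fin n))) (p := fun i => a i < b k)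
    have e2 := Finset.card_filter_add_card_filter_not
      (s := (univ : Finset (Fin n))) (p := fun i => b i < b k)
    rw [Finset.card_univ, Fintype.card_fin] at e1 e2
    exact ⟨n, by omega⟩
  -- Dwork prime comparison data
  choose Ta hTa1 hTa2 hTa3 using ha1
  choose Tb hTb1 hTb2 hTb3 using hb1
  have hak : ∀ i, a i ≠ b k := fun i h => hab i k 0 (by rw [h]; simp)
  have hchara : ∀ i, (a1 i < b1 k ↔
      ¬(b k < a i ∧ ‖((a i - b k : ℚ) : ℚ_[p])‖ < 1)) := fun i =>
    dwork_lt_iff p (b k) (b1 k) (a i) (a1 i) (Ta i) (hb k).1 hk hβ1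
      (ha i).1 (ha i).2 (hTa1 i) (hTa2 i) (hTa3 i) (hak i)
  have hcharb : ∀ j, j ≠ k → (b1 j < b1 k ↔
      ¬(b k < b j ∧ ‖((b j - b k : ℚ) : ℚ_[p])‖ < 1)) := fun j hj =>
    dwork_lt_iff p (b k) (b1 k) (b j) (b1 j) (Tb j) (hb k).1 hk hβ1
      (hb j).1 (hb j).2 (hTb1 j) (hTb2 j) (hTb3 j) (fun h => hj (hbdist h))
  -- counting
  have hNa : (univ.filter fun i => a1 i < b1 k).card +
      (univ.filter fun i => (b k < a i ∧ ‖((a i - b k : ℚ) : ℚ_[p])‖ < 1)).card = n := by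
    have hfe : (univ.filter fun i => a1 i < b1 k) =
        (univ.filter fun i => ¬(b k < a i ∧ ‖((a i - b k : ℚ) : ℚ_[p])‖ < 1)) :=
      Finset.filter_congr (fun i _ => by rw [hchara i])
    rw [hfe, add_comm, Finset.card_filter_add_card_filter_not,
      Finset.card_univ, Fintype.card_fin]
  have hNb : (univ.filter fun j => b1 j < b1 k).card +
      ((univ.filter fun j => (b k < b j ∧ ‖((b j - b k : ℚ) : ℚ_[p])‖ < 1)).card + 1) = n := by
    have hfe : (univ.filter fun j => b1 j < b1 k) =
        (univ.filter fun j =>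
          ¬((b k < b j ∧ ‖((b j - b k : ℚ) : ℚ_[p])‖ < 1) ∨ j = k)) := by
      refine Finset.filter_congr (fun j _ => ?_)
      by_cases hj : j = k
      · subst hj; simp
      · rw [hcharb j hj]
        simp [hj]
    have h2 : (univ.filter fun j =>
        ((b k < b j ∧ ‖((b j - b k : ℚ) : ℚ_[p])‖ < 1) ∨ j = k)) =
        insert k (univ.filter fun j => (b k < b j ∧ ‖((b j - b k : ℚ) : ℚ_[p])‖ < 1)) := by
      ext j
      simp only [Finset.mem_filter, Finset.mem_insert, Finset.mem_univ, true_and]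
      tauto
    have h3 : k ∉ (univ.filter fun j => (b k < b j ∧ ‖((b j - b k : ℚ) : ℚ_[p])‖ < 1)) := by
      simp
    have h4 := Finset.card_filter_add_card_filter_not
      (s := (univ : Finset (Fin n)))
      (p := fun j => ((b k < b j ∧ ‖((b j - b k : ℚ) : ℚ_[p])‖ < 1) ∨ j = k))
    rw [h2, Finset.card_insert_of_notMem h3, Finset.card_univ, Fintype.card_fin] at h4
    rw [hfe, add_comm, add_comm _ 1]
    omega
  have hZF : Zfun a1 b1 (b1 k) = 1 +
      ((univ.filter fun j => (b k < b j ∧ ‖((b j - b k : ℚ) : ℚ_[p])‖ < 1)).card : ℤ) -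
      ((univ.filter fun i => (b k < a i ∧ ‖((a i - b k : ℚ) : ℚ_[p])‖ < 1)).card : ℤ) := by
    rw [Zfun]; omega
  -- the p-power identity
  have hW : ∏ i, ((if b k < b i ∧ ‖((b i - b k : ℚ) : ℚ_[p])‖ < 1 then (p:ℚ_[p])⁻¹ else 1) /
      (if b k < a i ∧ ‖((a i - b k : ℚ) : ℚ_[p])‖ < 1 then (p:ℚ_[p])⁻¹ else 1)) =
      (p:ℚ_[p]) ^ ((1 : ℤ) - Zfun a1 b1 (b1 k)) := by
    rw [Finset.prod_div_distrib, Finset.prod_ite, Finset.prod_const, Finset.prod_const_one,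
      mul_one, Finset.prod_ite, Finset.prod_const, Finset.prod_const_one, mul_one, hZF]
    have he : (1:ℤ) - (1 +
        ((univ.filter fun j => (b k < b j ∧ ‖((b j - b k : ℚ) : ℚ_[p])‖ < 1)).card : ℤ) -
        ((univ.filter fun i => (b k < a i ∧ ‖((a i - b k : ℚ) : ℚ_[p])‖ < 1)).card : ℤ)) =
        ((univ.filter fun i => (b k < a i ∧ ‖((a i - b k : ℚ) : ℚ_[p])‖ < 1)).card : ℤ) -
        ((univ.filter fun j => (b k < b j ∧ ‖((b j - b k : ℚ) : ℚ_[p])‖ < 1)).card : ℤ) := by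
      ring
    rw [he, zpow_sub₀ hpne, zpow_natCast, zpow_natCast, inv_pow, inv_pow, inv_div_inv]
  -- the rplus identity
  have hU : ∏ i, ((((rplus (b i - b k) : ℚ) : ℚ_[p]) / ((rplus (b1 i - b1 k) : ℚ) : ℚ_[p])) /
      (((rplus (a i - b k) : ℚ) : ℚ_[p]) / ((rplus (a1 i - b1 k) : ℚ) : ℚ_[p]))) =
      ((Kfun a1 b1 (b1 k) : ℚ) : ℚ_[p]) / ((Kfun a b (b k) : ℚ) : ℚ_[p]) := by
    rw [Kfun, Kfun, Rat.cast_prod, Rat.cast_prod, ← Finset.prod_div_distrib]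
    refine Finset.prod_congr rfl fun i _ => ?_
    rw [Rat.cast_div, Rat.cast_div]
    have n1 : ((rplus (a i - b k) : ℚ) : ℚ_[p]) ≠ 0 :=
      Rat.cast_ne_zero.mpr (ne_of_gt (rplus_pos _))
    have n2 : ((rplus (b i - b k) : ℚ) : ℚ_[p]) ≠ 0 :=
      Rat.cast_ne_zero.mpr (ne_of_gt (rplus_pos _))
    have n3 : ((rplus (a1 i - b1 k) : ℚ) : ℚ_[p]) ≠ 0 :=
      Rat.cast_ne_zero.mpr (ne_of_gt (rplus_pos _))
    have n4 : ((rplus (b1 i - b1 k) : ℚ) : ℚ_[p]) ≠ 0 :=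
      Rat.cast_ne_zero.mpr (ne_of_gt (rplus_pos _))
    field_simp
  -- put it together
  rw [gammaConst, hRHS]
  have hCsplit : ∏ i, (((if b i < b k then (1:ℚ_[p]) else -1) *
        (if b k < b i ∧ ‖((b i - b k : ℚ) : ℚ_[p])‖ < 1 then (p:ℚ_[p])⁻¹ else 1) *
        (((rplus (b i - b k) : ℚ) : ℚ_[p]) / ((rplus (b1 i - b1 k) : ℚ) : ℚ_[p]))) /
        ((if a i < b k then (1:ℚ_[p]) else -1) *
        (if b k < a i ∧ ‖((a i - b k : ℚ) : ℚ_[p])‖ < 1 then (p:ℚ_[p])⁻¹ else 1) *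
        (((rplus (a i - b k) : ℚ) : ℚ_[p]) / ((rplus (a1 i - b1 k) : ℚ) : ℚ_[p])))) =
      (∏ i, ((if b i < b k then (1:ℚ_[p]) else -1) /
        (if a i < b k then (1:ℚ_[p]) else -1))) *
      ((∏ i, ((if b k < b i ∧ ‖((b i - b k : ℚ) : ℚ_[p])‖ < 1 then (p:ℚ_[p])⁻¹ else 1) /
        (if b k < a i ∧ ‖((a i - b k : ℚ) : ℚ_[p])‖ < 1 then (p:ℚ_[p])⁻¹ else 1))) *
      (∏ i, ((((rplus (b i - b k) : ℚ) : ℚ_[p]) / ((rplus (b1 i - b1 k) : ℚ) : ℚ_[p])) /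
        (((rplus (a i - b k) : ℚ) : ℚ_[p]) / ((rplus (a1 i - b1 k) : ℚ) : ℚ_[p]))))) := by
    rw [← Finset.prod_mul_distrib, ← Finset.prod_mul_distrib]
    refine Finset.prod_congr rfl fun i _ => ?_
    ring
  rw [hCsplit, hsign, hW, hU]
  have hzp : (p:ℚ_[p]) ^ ((1:ℤ) - Zfun a1 b1 (b1 k)) =
      (p:ℚ_[p]) * (p:ℚ_[p]) ^ (-Zfun a1 b1 (b1 k)) := by
    rw [sub_eq_add_neg, zpow_add₀ hpne, zpow_one]
  rw [hzp]
  have hcancel : (p:ℚ_[p])⁻¹ * (p:ℚ_[p]) = 1 := inv_mul_cancel₀ hpne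
  calc (-1:ℚ_[p]) ^ Zfun a b (b k) * (p:ℚ_[p]) ^ (-Zfun a1 b1 (b1 k)) *
        ((Kfun a1 b1 (b1 k) : ℚ) : ℚ_[p]) / ((Kfun a b (b k) : ℚ) : ℚ_[p]) *
      ∏ i, Γ ((Int.fract (b i - b k) : ℚ) : ℚ_[p]) / Γ ((Int.fract (a i - b k) : ℚ) : ℚ_[p])
      = ((p:ℚ_[p])⁻¹ * (p:ℚ_[p])) * ((-1:ℚ_[p]) ^ Zfun a b (b k) *
          (p:ℚ_[p]) ^ (-Zfun a1 b1 (b1 k)) *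
        ((Kfun a1 b1 (b1 k) : ℚ) : ℚ_[p]) / ((Kfun a b (b k) : ℚ) : ℚ_[p]) *
      ∏ i, Γ ((Int.fract (b i - b k) : ℚ) : ℚ_[p]) /
        Γ ((Int.fract (a i - b k) : ℚ) : ℚ_[p])) := by rw [hcancel, one_mul]
    _ = (p:ℚ_[p])⁻¹ * ((-1:ℚ_[p]) ^ Zfun a b (b k) *
        ((p:ℚ_[p]) * (p:ℚ_[p]) ^ (-Zfun a1 b1 (b1 k)) *
          (((Kfun a1 b1 (b1 k) : ℚ) : ℚ_[p]) / ((Kfun a b (b k) : ℚ) : ℚ_[p]))) *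
      ∏ i, Γ ((Int.fract (b i - b k) : ℚ) : ℚ_[p]) /
        Γ ((Int.fract (a i - b k) : ℚ) : ℚ_[p])) := by ring

/-- **Corollary:** if `b_k ≡ b_l ≡ 1 (mod p)` then, with `ε_k = b_k - 1`, `ε_l = b_l - 1`,
`γ_k/γ_l = ∏ᵢ (Γ_p(bᵢ-ε_k)/Γ_p(aᵢ-ε_k)) (Γ_p(aᵢ-ε_l)/Γ_p(bᵢ-ε_l))`, and `γ_l ≠ 0`. -/
theorem stmt_8 (p : ℕ) [Fact p.Prime] {n : ℕ}
    (Γ : ℚ_[p] → ℚ_[p]) (hΓc : ContinuousOn Γ {x : ℚ_[p] | ‖x‖ ≤ 1})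
    (hΓu : ∀ x : ℚ_[p], ‖x‖ ≤ 1 → ‖Γ x‖ = 1)
    (hΓ : ∀ m : ℕ, 0 < m →
      Γ (m : ℚ_[p]) = (-1 : ℚ_[p]) ^ m * ∏ k ∈ Finset.Ico 1 m, if p ∣ k then 1 else (k : ℚ_[p]))
    (a b a1 b1 : Fin n → ℚ)
    (haZ : ∀ i, ‖((a i : ℚ) : ℚ_[p])‖ ≤ 1) (hbZ : ∀ j, ‖((b j : ℚ) : ℚ_[p])‖ ≤ 1)
    (ha : ∀ i, 0 < a i ∧ a i < 1) (hb : ∀ j, 0 < b j ∧ b j < 1)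
    (hab : ∀ i j, ∀ t : ℤ, a i - b j ≠ (t : ℚ))
    (hbdist : Function.Injective b)
    (ha1 : ∀ i, IsDworkPrime p (a i) (a1 i)) (hb1 : ∀ j, IsDworkPrime p (b j) (b1 j))
    (k l : Fin n)
    (hk : ‖((b k - 1 : ℚ) : ℚ_[p])‖ ≤ (p : ℝ)⁻¹)
    (hl : ‖((b l - 1 : ℚ) : ℚ_[p])‖ ≤ (p : ℝ)⁻¹) :
    gammaConst p Γ a b a1 b1 l ≠ 0 ∧
      gammaConst p Γ a b a1 b1 k / gammaConst p Γ a b a1 b1 l =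
        ∏ i,
          (Γ ((b i - (b k - 1) : ℚ) : ℚ_[p]) / Γ ((a i - (b k - 1) : ℚ) : ℚ_[p])) *
            (Γ ((a i - (b l - 1) : ℚ) : ℚ_[p]) / Γ ((b i - (b l - 1) : ℚ) : ℚ_[p])) := by
  have hfact : Fact p.Prime := ‹_›
  have hΓne : ∀ x : ℚ_[p], ‖x‖ ≤ 1 → Γ x ≠ 0 := fun x hx h0 => by
    have h := hΓu x hx
    rw [h0, norm_zero] at h
    norm_num at h
  have hpinvle : (p:ℝ)⁻¹ ≤ 1 :=
    le_of_lt (inv_lt_one_of_one_lt₀ (by exact_mod_cast hfact.1.one_lt))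
  have hnorm_arg : ∀ q r : ℚ, ‖(q:ℚ_[p])‖ ≤ 1 → ‖((r:ℚ):ℚ_[p])‖ ≤ (p:ℝ)⁻¹ →
      ‖((q - r : ℚ) : ℚ_[p])‖ ≤ 1 := by
    intro q r h1 h2
    have hid : ((q - r : ℚ) : ℚ_[p]) = (q:ℚ_[p]) + (-((r:ℚ):ℚ_[p])) := by push_cast; ring
    rw [hid]
    exact le_trans (Padic.nonarchimedean _ _)
      (max_le h1 (by rw [norm_neg]; exact le_trans h2 hpinvle))
  have e1 := gammaConst_eq p Γ hΓc hΓ a b a1 b1 haZ hbZ ha hb hab hbdist ha1 hb1 k hk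
  have e2 := gammaConst_eq p Γ hΓc hΓ a b a1 b1 haZ hbZ ha hb hab hbdist ha1 hb1 l hl
  have hpne : ((p:ℚ_[p])) ≠ 0 := by exact_mod_cast hfact.1.ne_zero
  have hprodl : (∏ i, Γ ((b i - (b l - 1) : ℚ) : ℚ_[p]) /
      Γ ((a i - (b l - 1) : ℚ) : ℚ_[p])) ≠ 0 :=
    Finset.prod_ne_zero_iff.mpr fun i _ =>
      div_ne_zero (hΓne _ (hnorm_arg _ _ (hbZ i) hl)) (hΓne _ (hnorm_arg _ _ (haZ i) hl))
  constructor
  · rw [e2]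
    exact mul_ne_zero (inv_ne_zero hpne) hprodl
  · rw [e1, e2, mul_div_mul_left _ _ (inv_ne_zero hpne), ← Finset.prod_div_distrib]
    refine Finset.prod_congr rfl fun i _ => ?_
    have n1 := hΓne _ (hnorm_arg (b i) (b k - 1) (hbZ i) hk)
    have n2 := hΓne _ (hnorm_arg (a i) (b k - 1) (haZ i) hk)
    have n3 := hΓne _ (hnorm_arg (a i) (b l - 1) (haZ i) hl)
    have n4 := hΓne _ (hnorm_arg (b i) (b l - 1) (hbZ i) hl)
    field_simp
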